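/- For every λ ∈ ℂ and every real t > 0, the family ( (m,n) ↦ ( t^m · λ^n · t^{−κ·n} ) • c(m,n) ) indexed by ℕ×ℕ is summable in E; denoting its sum by F(t), one has ‖F(t) − c(0,0)‖ ≤ exp( K·( t + |λ|·t^{1−κ}/(1−κ) ) ) − 1, and in particular F(t) → c(0,0) as t → 0⁺. (The convergence and limit estimate in the proof of Proposition 5.6 (thm:frobeniusz) of the paper, showing that the double series Σ c_{m,n} z^m (λ z^{−κ})^n defining the Frobenius solution converges and tends to its leading coefficient as z → 0.) -/

import Mathlib

set_option maxHeartbeats 2000000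

/-- The convergence and limit estimate in the proof of Proposition 5.6 (thm:frobeniusz) of the
paper: if `c : ℕ → ℕ → E` (E a complex Banach space) vanishes for `n > m` and satisfies
`‖c(m,n)‖ ≤ K^m / ((1−κ)^n (m−n)! n!)` for `n ≤ m`, then for every `λ ∈ ℂ` and every `t > 0`
the family `(t^m · λ^n · t^{−κn}) • c(m,n)` is summable; its sum `F(t)` satisfies
`‖F(t) − c(0,0)‖ ≤ exp(K (t + |λ| t^{1−κ}/(1−κ))) − 1`, and `F(t) → c(0,0)` as `t → 0⁺`. -/
theorem frobenius_series_convergence (κ K : ℝ) (hκ0 : 0 < κ) (hκ1 : κ < 1) (hK : 0 ≤ K)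
    {E : Type*} [NormedAddCommGroup E] [NormedSpace ℂ E] [CompleteSpace E]
    (c : ℕ → ℕ → E)
    (hvanish : ∀ m n : ℕ, m < n → c m n = 0)
    (hbound : ∀ m n : ℕ, n ≤ m →
      ‖c m n‖ ≤ K ^ m / ((1 - κ) ^ n * (m - n).factorial * n.factorial))
    (lam : ℂ) :
    (∀ t : ℝ, 0 < t → Summable (fun p : ℕ × ℕ =>
      (((t ^ p.1 : ℝ) : ℂ) * lam ^ p.2 * ((t ^ (-(κ * (p.2 : ℝ))) : ℝ) : ℂ)) • c p.1 p.2)) ∧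
    (∀ t : ℝ, 0 < t →
      ‖(∑' p : ℕ × ℕ,
          (((t ^ p.1 : ℝ) : ℂ) * lam ^ p.2 * ((t ^ (-(κ * (p.2 : ℝ))) : ℝ) : ℂ)) • c p.1 p.2)
        - c 0 0‖ ≤ Real.exp (K * (t + ‖lam‖ * t ^ (1 - κ) / (1 - κ))) - 1) ∧
    Filter.Tendsto
      (fun t : ℝ => ∑' p : ℕ × ℕ,
        (((t ^ p.1 : ℝ) : ℂ) * lam ^ p.2 * ((t ^ (-(κ * (p.2 : ℝ))) : ℝ) : ℂ)) • c p.1 p.2)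
      (nhdsWithin 0 (Set.Ioi 0)) (nhds (c 0 0)) := by
  classical
  have hκ' : (0:ℝ) < 1 - κ := by linarith
  set L : ℝ := ‖lam‖ with hLdef
  have hL0 : 0 ≤ L := norm_nonneg _
  have hexp : ∀ x : ℝ, (∑' n : ℕ, x ^ n / n.factorial) = Real.exp x := by
    intro x
    rw [Real.exp_eq_exp_ℝ, NormedSpace.exp_eq_tsum_div]
  -- the main estimate, for each fixed t > 0
  have main : ∀ t : ℝ, 0 < t →
      Summable (fun p : ℕ × ℕ =>
        (((t ^ p.1 : ℝ) : ℂ) * lam ^ p.2 * ((t ^ (-(κ * (p.2 : ℝ))) : ℝ) : ℂ)) • c p.1 p.2) ∧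
      ‖(∑' p : ℕ × ℕ,
          (((t ^ p.1 : ℝ) : ℂ) * lam ^ p.2 * ((t ^ (-(κ * (p.2 : ℝ))) : ℝ) : ℂ)) • c p.1 p.2)
        - c 0 0‖ ≤ Real.exp (K * (t + L * t ^ (1 - κ) / (1 - κ))) - 1 := by
    intro t ht
    set A : ℝ := K * t with hAdef
    set B : ℝ := K * L * t ^ (1 - κ) / (1 - κ) with hBdef
    have hA0 : 0 ≤ A := mul_nonneg hK ht.le
    have hB0 : 0 ≤ B :=
      div_nonneg (mul_nonneg (mul_nonneg hK hL0) (Real.rpow_nonneg ht.le _)) hκ'.le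
    set term : ℕ × ℕ → E := fun p =>
      (((t ^ p.1 : ℝ) : ℂ) * lam ^ p.2 * ((t ^ (-(κ * (p.2 : ℝ))) : ℝ) : ℂ)) • c p.1 p.2
      with htermdef
    set g : ℕ × ℕ → ℝ := fun q =>
      (A ^ q.1 / q.1.factorial) * (B ^ q.2 / q.2.factorial) with hgdef
    set h : ℕ × ℕ → ℝ := fun p =>
      if p.2 ≤ p.1 then (A ^ (p.1 - p.2) / (p.1 - p.2).factorial) * (B ^ p.2 / p.2.factorial)
      else 0 with hhdef
    have hh0 : ∀ p, 0 ≤ h p := by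
      intro p
      simp only [hhdef]
      split
      · positivity
      · exact le_rfl
    -- g is summable with sum exp A * exp B
    have hgsum : Summable g :=
      (Real.summable_pow_div_factorial A).mul_of_nonneg
        (Real.summable_pow_div_factorial B)
        (fun n => by positivity) (fun n => by positivity)
    have hgtsum : (∑' q : ℕ × ℕ, g q) = Real.exp A * Real.exp B := by
      rw [← hexp A, ← hexp B]
      exact (Summable.tsum_mul_tsum (Real.summable_pow_div_factorial A)
        (Real.summable_pow_div_factorial B) hgsum).symm
    -- transfer summability of g to h via the injection (j, n) ↦ (n + j, n)
    have e_inj : Function.Injective (fun q : ℕ × ℕ => ((q.2 + q.1, q.2) : ℕ × ℕ)) := by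
      intro q q' hqq'
      simp only [Prod.mk.injEq] at hqq'
      exact Prod.ext (by omega) hqq'.2
    have h_comp : ∀ q : ℕ × ℕ, h (q.2 + q.1, q.2) = g q := by
      intro q
      simp only [hhdef, hgdef]
      rw [if_pos (Nat.le_add_right _ _), Nat.add_sub_cancel_left]
    have h_off : ∀ p ∉ Set.range (fun q : ℕ × ℕ => (q.2 + q.1, q.2)), h p = 0 := by
      intro p hp
      by_cases hle : p.2 ≤ p.1
      · exact absurd ⟨(p.1 - p.2, p.2), by simp [Prod.ext_iff]; omega⟩ hp
      · simp only [hhdef]; rw [if_neg hle]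
    have h_comp' : (h ∘ fun q : ℕ × ℕ => ((q.2 + q.1, q.2) : ℕ × ℕ)) = g :=
      funext fun q => h_comp q
    have hhsum : Summable h :=
      (Function.Injective.summable_iff e_inj h_off).mp (h_comp' ▸ hgsum)
    have hsupp : Function.support h ⊆ Set.range (fun q : ℕ × ℕ => ((q.2 + q.1, q.2) : ℕ × ℕ)) :=
      Function.support_subset_iff'.mpr h_off
    have hhtsum : (∑' p : ℕ × ℕ, h p) = Real.exp A * Real.exp B := by
      have heq := Function.Injective.tsum_eq e_inj (f := h) hsupp
      rw [← heq]
      exact (tsum_congr h_comp).trans hgtsum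
    -- pointwise bound ‖term p‖ ≤ h p
    have key : ∀ p : ℕ × ℕ, ‖term p‖ ≤ h p := by
      rintro ⟨m, n⟩
      by_cases hle : n ≤ m
      · have hcmn := hbound m n hle
        have hcoef : ‖(((t ^ m : ℝ) : ℂ) * lam ^ n * ((t ^ (-(κ * (n : ℝ))) : ℝ) : ℂ))‖
            = t ^ m * L ^ n * t ^ (-(κ * (n : ℝ))) := by
          simp only [norm_mul, Complex.norm_real, norm_pow, Real.norm_eq_abs,
            abs_of_nonneg ht.le,
            abs_of_nonneg (Real.rpow_nonneg ht.le (-(κ * (n : ℝ))))]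
          rw [hLdef]
        have hnorm : ‖term (m, n)‖
            = t ^ m * L ^ n * t ^ (-(κ * (n : ℝ))) * ‖c m n‖ := by
          rw [htermdef]
          simp only [norm_smul]
          rw [hcoef]
        rw [hnorm]
        have hbpos : (0:ℝ) < (1 - κ) ^ n * (m - n).factorial * n.factorial := by
          positivity
        have hfac : t ^ m * L ^ n * t ^ (-(κ * (n : ℝ)))
            * (K ^ m / ((1 - κ) ^ n * (m - n).factorial * n.factorial))
            = (A ^ (m - n) / (m - n).factorial) * (B ^ n / n.factorial) := by
          have hpowid : (t : ℝ) ^ m * t ^ (-(κ * (n : ℝ)))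
              = t ^ (m - n) * (t ^ (1 - κ)) ^ n := by
            have h1 : (t : ℝ) ^ m = t ^ ((m : ℝ)) := (Real.rpow_natCast t m).symm
            have h2 : (t : ℝ) ^ (m - n) = t ^ (((m - n : ℕ) : ℝ)) :=
              (Real.rpow_natCast t (m - n)).symm
            have h3 : ((t : ℝ) ^ (1 - κ)) ^ n = t ^ ((1 - κ) * n) := by
              rw [Real.rpow_mul ht.le, Real.rpow_natCast]
            rw [h1, h2, h3, ← Real.rpow_add ht, ← Real.rpow_add ht]
            congr 1
            have : ((m - n : ℕ) : ℝ) = (m : ℝ) - n := by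
              rw [Nat.cast_sub hle]
            rw [this]; ring
          have hKm : K ^ m = K ^ (m - n) * K ^ n := by
            rw [← pow_add]; congr 1; omega
          have hd1 : ((1:ℝ) - κ) ^ n ≠ 0 := pow_ne_zero _ hκ'.ne'
          have hd2 : (((m - n).factorial : ℝ)) ≠ 0 :=
            Nat.cast_ne_zero.mpr (m - n).factorial_ne_zero
          have hd3 : ((n.factorial : ℝ)) ≠ 0 := Nat.cast_ne_zero.mpr n.factorial_ne_zero
          rw [mul_right_comm (t ^ m) (L ^ n) (t ^ (-(κ * (n : ℝ)))), hpowid, hKm,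
            hAdef, hBdef]
          rw [div_pow]
          field_simp
          ring
        have hhval : h (m, n)
            = (A ^ (m - n) / (m - n).factorial) * (B ^ n / n.factorial) := by
          simp only [hhdef]; rw [if_pos hle]
        rw [hhval, ← hfac]
        have hcoefpos : 0 ≤ t ^ m * L ^ n * t ^ (-(κ * (n : ℝ))) := by positivity
        exact mul_le_mul_of_nonneg_left hcmn hcoefpos
      · have : c m n = 0 := hvanish m n (not_le.mp hle)
        simp only [htermdef, this, smul_zero, norm_zero]
        exact hh0 (m, n)
    have hsum : Summable term := Summable.of_norm_bounded hhsum key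
    refine ⟨hsum, ?_⟩
    -- term (0,0) = c 0 0
    have hterm00 : term (0, 0) = c 0 0 := by
      simp only [htermdef]
      norm_num
    have h00 : h (0, 0) = 1 := by
      simp only [hhdef]
      norm_num
    have hsplit := Summable.tsum_eq_add_tsum_ite hsum ((0, 0) : ℕ × ℕ)
    have hsplit_h := Summable.tsum_eq_add_tsum_ite hhsum ((0, 0) : ℕ × ℕ)
    have hrem_sum_le :
        ‖∑' p : ℕ × ℕ, (if p = (0, 0) then 0 else term p)‖
          ≤ ∑' p : ℕ × ℕ, (if p = (0, 0) then 0 else h p) := by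
      have hsum' : Summable (fun p : ℕ × ℕ => if p = (0, 0) then (0:E) else term p) := by
        apply hsum.summable_of_eq_zero_or_self
        intro p
        by_cases hp : p = (0, 0)
        · exact Or.inl (if_pos hp)
        · exact Or.inr (if_neg hp)
      have hhsum' : Summable (fun p : ℕ × ℕ => if p = (0, 0) then (0:ℝ) else h p) := by
        apply hhsum.summable_of_eq_zero_or_self
        intro p
        by_cases hp : p = (0, 0)
        · exact Or.inl (if_pos hp)
        · exact Or.inr (if_neg hp)
      refine tsum_of_norm_bounded hhsum'.hasSum ?_
      intro p
      by_cases hp : p = (0, 0)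
      · simp [hp]
      · simp only [if_neg hp]; exact key p
    have hrem_h : (∑' p : ℕ × ℕ, (if p = (0, 0) then 0 else h p))
        = Real.exp A * Real.exp B - 1 := by
      have h1 := hsplit_h
      rw [h00, hhtsum] at h1
      linarith
    have habeq : Real.exp A * Real.exp B
        = Real.exp (K * (t + L * t ^ (1 - κ) / (1 - κ))) := by
      rw [← Real.exp_add]
      congr 1
      rw [hAdef, hBdef]
      field_simp
    calc ‖(∑' p : ℕ × ℕ, term p) - c 0 0‖
        = ‖∑' p : ℕ × ℕ, (if p = (0, 0) then 0 else term p)‖ := by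
          rw [hsplit, hterm00]; congr 1; abel
      _ ≤ ∑' p : ℕ × ℕ, (if p = (0, 0) then 0 else h p) := hrem_sum_le
      _ = Real.exp A * Real.exp B - 1 := hrem_h
      _ = Real.exp (K * (t + L * t ^ (1 - κ) / (1 - κ))) - 1 := by rw [habeq]
  refine ⟨fun t ht => (main t ht).1, fun t ht => (main t ht).2, ?_⟩
  -- the limit as t → 0⁺
  have hg0 : Filter.Tendsto
      (fun t : ℝ => Real.exp (K * (t + L * t ^ (1 - κ) / (1 - κ))) - 1)
      (nhdsWithin 0 (Set.Ioi 0)) (nhds 0) := by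
    have hrpow : Filter.Tendsto (fun t : ℝ => t ^ (1 - κ)) (nhds 0) (nhds 0) := by
      have hc : ContinuousAt (fun t : ℝ => t ^ (1 - κ)) 0 :=
        Real.continuousAt_rpow_const 0 (1 - κ) (Or.inr hκ'.le)
      have h0 : (0:ℝ) ^ (1 - κ) = 0 := Real.zero_rpow hκ'.ne'
      simpa [h0] using hc.tendsto
    have hinner : Filter.Tendsto
        (fun t : ℝ => K * (t + L * t ^ (1 - κ) / (1 - κ))) (nhds 0) (nhds 0) := by
      have : Filter.Tendsto (fun t : ℝ => t + L * t ^ (1 - κ) / (1 - κ)) (nhds 0) (nhds 0) := by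
        have h1 : Filter.Tendsto (fun t : ℝ => L * t ^ (1 - κ) / (1 - κ)) (nhds 0) (nhds 0) := by
          have := (hrpow.const_mul L).div_const (1 - κ)
          simpa [mul_div_assoc] using this
        simpa using (Filter.tendsto_id.add h1)
      simpa using this.const_mul K
    have := (Real.continuous_exp.tendsto 0).comp hinner
    have h2 : Filter.Tendsto
        (fun t : ℝ => Real.exp (K * (t + L * t ^ (1 - κ) / (1 - κ)))) (nhds 0) (nhds 1) := by
      simpa [Function.comp_def] using this
    have := h2.sub_const 1
    simpa using this.mono_left nhdsWithin_le_nhds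
  have hdiff : Filter.Tendsto
      (fun t : ℝ => (∑' p : ℕ × ℕ,
        (((t ^ p.1 : ℝ) : ℂ) * lam ^ p.2 * ((t ^ (-(κ * (p.2 : ℝ))) : ℝ) : ℂ)) • c p.1 p.2)
        - c 0 0)
      (nhdsWithin 0 (Set.Ioi 0)) (nhds 0) := by
    apply squeeze_zero_norm' ?_ hg0
    filter_upwards [self_mem_nhdsWithin] with t ht
    exact (main t ht).2
  have := hdiff.add_const (c 0 0)
  simpa using this
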